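/- Every mechanism on tie-free profiles that is anonymous, neutral, ordinal, unilateral and truthful is a convex combination of the mechanisms J^{1,q}_U for q ∈ {1,...,m}. -/

import Mathlib

open Finset

/-- A normalized preference function: maps into `[0,1]` and attains both `0` and `1`. -/
def IsPref {m : ℕ} (u : Fin m → ℝ) : Prop :=
  (∀ j, 0 ≤ u j ∧ u j ≤ 1) ∧ (∃ j, u j = 0) ∧ (∃ j, u j = 1)

/-- A tie-free normalized preference function. -/
def IsPrefU {m : ℕ} (u : Fin m → ℝ) : Prop :=
  IsPref u ∧ Function.Injective u

/-- A profile of normalized preference functions. -/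
def IsProfile {n m : ℕ} (u : Fin n → Fin m → ℝ) : Prop :=
  ∀ i, IsPref (u i)

/-- A tie-free profile. -/
def IsProfileU {n m : ℕ} (u : Fin n → Fin m → ℝ) : Prop :=
  ∀ i, IsPrefU (u i)

/-- `p` is a probability distribution over the `m` candidates. -/
def IsDist {m : ℕ} (p : Fin m → ℝ) : Prop :=
  (∀ j, 0 ≤ p j) ∧ ∑ j, p j = 1

/-- Social welfare of candidate `j` under profile `u`. -/
def Wel {n m : ℕ} (j : Fin m) (u : Fin n → Fin m → ℝ) : ℝ :=
  ∑ i, u i j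

/-- Range voting: the candidate of maximal social welfare, ties broken
toward the smaller index. -/
noncomputable def RV {n m : ℕ} (hm : 0 < m) (u : Fin n → Fin m → ℝ) : Fin m :=
  (Finset.univ.filter fun j => ∀ j', Wel j' u ≤ Wel j u).min' (by
    obtain ⟨j, -, hj⟩ := Finset.exists_max_image (Finset.univ : Finset (Fin m))
      (fun j => Wel j u) ⟨⟨0, hm⟩, Finset.mem_univ _⟩
    exact ⟨j, Finset.mem_filter.2 ⟨Finset.mem_univ _, fun j' => hj j' (Finset.mem_univ _)⟩⟩)

/-- Expected social welfare of a randomized mechanism `J` (given as the map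
sending a profile to the probability of each candidate winning). -/
noncomputable def expWel {n m : ℕ} (J : (Fin n → Fin m → ℝ) → Fin m → ℝ)
    (u : Fin n → Fin m → ℝ) : ℝ :=
  ∑ j, J u j * Wel j u

/-- Rank of candidate `j` in preference `v`, ties broken in favor of the
smaller candidate index (the most preferred candidate has rank 1). -/
noncomputable def rnk {m : ℕ} (v : Fin m → ℝ) (j : Fin m) : ℕ :=
  (Finset.univ.filter fun j' => v j < v j' ∨ (v j' = v j ∧ j' ≤ j)).card

/-- The mechanism `J^{1,q}`: pick a voter uniformly at random, then a winner
uniformly at random among that voter's `q` most preferred candidates. -/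
noncomputable def Jone (q : ℕ) {n m : ℕ} (u : Fin n → Fin m → ℝ) : Fin m → ℝ :=
  fun j => (∑ i : Fin n, if rnk (u i) j ≤ q then ((q : ℝ))⁻¹ else 0) / (n : ℝ)

/-- `⌊m^{1/3}⌋`. -/
noncomputable def mroot3 (m : ℕ) : ℕ := ⌊(m : ℝ) ^ ((1 : ℝ)/3)⌋₊

/-- The mechanism `J*`, running `J^{1,1}` and `J^{1,⌊m^{1/3}⌋}` each with
probability `1/2`. -/
noncomputable def Jstar {n m : ℕ} (u : Fin n → Fin m → ℝ) : Fin m → ℝ :=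
  fun j => (Jone 1 u j + Jone (mroot3 m) u j) / 2

/-- Voter with preference `v` prefers `j₀` to `j₁` (ties toward the smaller
candidate index). -/
def Prefers {m : ℕ} (v : Fin m → ℝ) (j₀ j₁ : Fin m) : Prop :=
  v j₁ < v j₀ ∨ (v j₀ = v j₁ ∧ j₀ < j₁)

noncomputable instance {m : ℕ} (v : Fin m → ℝ) (j₀ j₁ : Fin m) :
    Decidable (Prefers v j₀ j₁) := by unfold Prefers; infer_instance

/-- The mechanism `J^{2,q}`: pick two distinct candidates uniformly at random,
let each voter vote for the one it prefers; if one of the two gets at least `q`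
votes it wins, otherwise the winner is one of the two by a fair coin. -/
noncomputable def Jtwo (q : ℕ) {n m : ℕ} (u : Fin n → Fin m → ℝ) : Fin m → ℝ :=
  fun j =>
    (∑ j₀ : Fin m, ∑ j₁ : Fin m,
      if j₀ = j₁ then 0
      else
        if q ≤ (Finset.univ.filter fun i => Prefers (u i) j₀ j₁).card then
          (if j = j₀ then (1 : ℝ) else 0)
        else if q ≤ n - (Finset.univ.filter fun i => Prefers (u i) j₀ j₁).card then
          (if j = j₁ then (1 : ℝ) else 0)
        else ((if j = j₀ then (1 : ℝ)/2 else 0) + (if j = j₁ then (1 : ℝ)/2 else 0)))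
      / ((m * (m - 1) : ℕ) : ℝ)

/-- `J` assigns a probability distribution to every tie-free profile. -/
def MechU {n m : ℕ} (J : (Fin n → Fin m → ℝ) → Fin m → ℝ) : Prop :=
  ∀ u, IsProfileU u → IsDist (J u)

/-- Truthfulness (on tie-free profiles). -/
def Truthful {n m : ℕ} (J : (Fin n → Fin m → ℝ) → Fin m → ℝ) : Prop :=
  ∀ u, IsProfileU u → ∀ (i : Fin n) (v : Fin m → ℝ), IsPrefU v →
    ∑ j, J (Function.update u i v) j * u i j ≤ ∑ j, J u j * u i j

/-- Ordinality (on tie-free profiles). -/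
def OrdinalMech {n m : ℕ} (J : (Fin n → Fin m → ℝ) → Fin m → ℝ) : Prop :=
  ∀ u u' : Fin n → Fin m → ℝ, IsProfileU u → IsProfileU u' →
    (∀ i (j j' : Fin m), u i j < u i j' ↔ u' i j < u' i j') → J u = J u'

/-- Unilateral mechanism (on tie-free profiles): depends only on one voter. -/
def Unilateral {n m : ℕ} (J : (Fin n → Fin m → ℝ) → Fin m → ℝ) : Prop :=
  ∃ i : Fin n, ∀ u u' : Fin n → Fin m → ℝ, IsProfileU u → IsProfileU u' →
    u i = u' i → J u = J u'

/-- Duple mechanism (on tie-free profiles): supported on two fixed candidates. -/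
def Duple {n m : ℕ} (J : (Fin n → Fin m → ℝ) → Fin m → ℝ) : Prop :=
  ∃ j₀ j₁ : Fin m, j₀ ≠ j₁ ∧ ∀ u, IsProfileU u → ∀ j, j ≠ j₀ → j ≠ j₁ → J u j = 0

/-- Neutral mechanism (on tie-free profiles). -/
def Neutral {n m : ℕ} (J : (Fin n → Fin m → ℝ) → Fin m → ℝ) : Prop :=
  ∀ τ : Equiv.Perm (Fin m), ∀ u : Fin n → Fin m → ℝ, IsProfileU u →
    ∀ j, J (fun i => u i ∘ τ) j = J u (τ j)

/-- Anonymous mechanism (on tie-free profiles). -/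
def AnonymousMech {n m : ℕ} (J : (Fin n → Fin m → ℝ) → Fin m → ℝ) : Prop :=
  ∀ σ : Equiv.Perm (Fin n), ∀ u : Fin n → Fin m → ℝ, IsProfileU u →
    J (fun i => u (σ i)) = J u

/-- `ratio_U(J)`: infimum of the welfare ratio over tie-free profiles. -/
noncomputable def ratioU {n m : ℕ} (hm : 0 < m)
    (J : (Fin n → Fin m → ℝ) → Fin m → ℝ) : ℝ :=
  sInf {r | ∃ u, IsProfileU u ∧ r = expWel J u / Wel (RV hm u) u}

/-- `R_k`: tie-free normalized preferences taking values in `{0,1/k,…,1}`. -/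
def Rk {m : ℕ} (k : ℕ) (u : Fin m → ℝ) : Prop :=
  IsPrefU u ∧ ∀ j, ∃ t : ℕ, t ≤ k ∧ u j = (t : ℝ) / k

/-- `a(u)`: the number of `t ∈ {0,…,k-1}` such that exactly one of `t/k` and
`(t+1)/k` lies in the image of `u`. -/
noncomputable def aOf {m : ℕ} (k : ℕ) (u : Fin m → ℝ) : ℕ :=
  ((Finset.range k).filter fun t : ℕ =>
    ((∃ j : Fin m, u j = (t : ℝ) / k) ∧ ¬ (∃ j : Fin m, u j = ((t : ℝ) + 1) / k)) ∨
    ((∃ j : Fin m, u j = ((t : ℝ) + 1) / k) ∧ ¬ (∃ j : Fin m, u j = (t : ℝ) / k))).card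

/-- `C_k = {u ∈ R_k : a(u) = 2}`. -/
def Ck {m : ℕ} (k : ℕ) (u : Fin m → ℝ) : Prop :=
  Rk k u ∧ aOf k u = 2

/-- `count(u)`: the number of candidates with `u`-value above `1/2`. -/
noncomputable def countOf {m : ℕ} (u : Fin m → ℝ) : ℕ :=
  (Finset.univ.filter fun j => (1 : ℝ)/2 < u j).card

/-- `rank(u,j) = #{j' : u(j') ≥ u(j)}`. -/
noncomputable def rankOf {m : ℕ} (u : Fin m → ℝ) (j : Fin m) : ℕ :=
  (Finset.univ.filter fun j' => u j ≤ u j').card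

/-- `D_k = D_k^{(a)} ∪ D_k^{(b)} ∪ D_k^{(c)}` (`⟨0,hm⟩` is the first candidate). -/
def Dk {m : ℕ} (hm : 0 < m) (k : ℕ) (u : Fin m → ℝ) : Prop :=
  Ck k u ∧
    ((countOf u ≤ 2 ∧ (1 : ℝ)/2 < u ⟨0, hm⟩) ∨
     (countOf u = 1 ∧ mroot3 m < rankOf u ⟨0, hm⟩) ∨
     (countOf u = mroot3 m + 1 ∧ rankOf u ⟨0, hm⟩ = mroot3 m + 1))

/-- `g(u) = E[Wel(J*(u),u)] / Wel(1,u)` where `1` is the first candidate. -/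
noncomputable def gfun {n m : ℕ} (hm : 0 < m) (u : Fin n → Fin m → ℝ) : ℝ :=
  expWel Jstar u / Wel ⟨0, hm⟩ u

/-- The minimum (as an infimum) of `f` over profiles all of whose preference
functions satisfy `P`. -/
noncomputable def minOver {n m : ℕ} (P : (Fin m → ℝ) → Prop)
    (f : (Fin n → Fin m → ℝ) → ℝ) : ℝ :=
  sInf {r | ∃ u : Fin n → Fin m → ℝ, (∀ i, P (u i)) ∧ r = f u}

namespace Stmt3Aux

noncomputable def vstar (m : ℕ) : Fin m → ℝ := fun j => 1 - (j : ℝ) / (m - 1)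

variable {m : ℕ}

lemma vstar_lt (hm : 2 ≤ m) {j j' : Fin m} : vstar m j < vstar m j' ↔ (j' : ℕ) < j := by
  have h : (0:ℝ) < (m:ℝ) - 1 := by
    have : (2:ℝ) ≤ (m:ℝ) := by exact_mod_cast hm
    linarith
  unfold vstar
  rw [sub_lt_sub_iff_left, div_lt_div_iff_of_pos_right h]
  exact_mod_cast Iff.rfl

lemma vstar_inj (hm : 2 ≤ m) : Function.Injective (vstar m) := by
  intro a b hab
  by_contra hne
  rcases Nat.lt_or_ge (a : ℕ) (b : ℕ) with h | h
  · exact absurd hab (ne_of_gt ((vstar_lt hm).2 h))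
  · have h' : (b:ℕ) < a := lt_of_le_of_ne h (by
      intro hc; exact hne (Fin.ext hc.symm))
    exact absurd hab (ne_of_lt ((vstar_lt hm).2 h'))

lemma vstar_mem01 (hm : 2 ≤ m) (j : Fin m) : 0 ≤ vstar m j ∧ vstar m j ≤ 1 := by
  have h : (0:ℝ) < (m:ℝ) - 1 := by
    have : (2:ℝ) ≤ (m:ℝ) := by exact_mod_cast hm
    linarith
  have hj : (j:ℝ) ≤ (m:ℝ) - 1 := by
    have := j.isLt
    have : (j:ℝ) < (m:ℝ) := by exact_mod_cast this
    have hj1 : ((j:ℕ):ℝ) + 1 ≤ (m:ℝ) := by exact_mod_cast j.isLt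
    linarith
  constructor
  · have : (j:ℝ)/((m:ℝ)-1) ≤ 1 := (div_le_one h).2 hj
    unfold vstar; linarith
  · have : 0 ≤ (j:ℝ)/((m:ℝ)-1) := div_nonneg (by positivity) h.le
    unfold vstar; linarith

lemma vstar_pref (hm : 2 ≤ m) :
    (∀ j, 0 ≤ vstar m j ∧ vstar m j ≤ 1) ∧ (∃ j, vstar m j = 0) ∧ ∃ j, vstar m j = 1 := by
  have h : (0:ℝ) < (m:ℝ) - 1 := by
    have : (2:ℝ) ≤ (m:ℝ) := by exact_mod_cast hm
    linarith
  refine ⟨vstar_mem01 hm, ⟨⟨m-1, by omega⟩, ?_⟩, ⟨⟨0, by omega⟩, ?_⟩⟩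
  · show (1:ℝ) - ((m-1 : ℕ):ℝ)/((m:ℝ)-1) = 0
    have : ((m-1:ℕ):ℝ) = (m:ℝ) - 1 := by
      have : (1:ℕ) ≤ m := by omega
      push_cast [Nat.cast_sub this]; ring
    rw [this, div_self h.ne', sub_self]
  · show (1:ℝ) - ((0:ℕ):ℝ)/((m:ℝ)-1) = 1
    norm_num

-- rnk for injective v
lemma rnk_eq {v : Fin m → ℝ} (hv : Function.Injective v) (j : Fin m) :
    rnk v j = (Finset.univ.filter fun j' => v j ≤ v j').card := by
  unfold rnk
  congr 1
  apply Finset.filter_congr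
  intro j' _
  constructor
  · rintro (h | ⟨h, _⟩)
    · exact h.le
    · exact h.ge
  · intro h
    rcases eq_or_lt_of_le h with h | h
    · exact Or.inr ⟨h.symm, le_of_eq (hv h.symm)⟩
    · exact Or.inl h

lemma rnk_pos {v : Fin m → ℝ} (hv : Function.Injective v) (j : Fin m) : 1 ≤ rnk v j := by
  rw [rnk_eq hv]
  refine Finset.card_pos.2 ⟨j, ?_⟩
  simp

lemma rnk_le {v : Fin m → ℝ} (j : Fin m) : rnk v j ≤ m := by
  unfold rnk
  calc _ ≤ (Finset.univ : Finset (Fin m)).card := Finset.card_filter_le _ _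
  _ = m := by simp

lemma rnk_lt_of_lt {v : Fin m → ℝ} (hv : Function.Injective v) {a b : Fin m}
    (h : v a < v b) : rnk v b < rnk v a := by
  rw [rnk_eq hv, rnk_eq hv]
  apply Finset.card_lt_card
  constructor
  · intro j hj
    simp only [Finset.mem_filter, Finset.mem_univ, true_and] at hj ⊢
    linarith
  · intro hsub
    have := hsub (by simp : a ∈ Finset.univ.filter fun j' => v a ≤ v j')
    simp only [Finset.mem_filter, Finset.mem_univ, true_and] at this
    linarith

lemma lt_iff_rnk {v : Fin m → ℝ} (hv : Function.Injective v) {a b : Fin m} :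
    v a < v b ↔ rnk v b < rnk v a := by
  constructor
  · exact rnk_lt_of_lt hv
  · intro h
    rcases lt_trichotomy (v a) (v b) with h' | h' | h'
    · exact h'
    · rw [hv h'] at h; omega
    · exact absurd (rnk_lt_of_lt hv h') (by omega)

lemma rnk_inj {v : Fin m → ℝ} (hv : Function.Injective v) :
    Function.Injective (fun j => rnk v j) := by
  intro a b hab
  simp only at hab
  by_contra hne
  rcases lt_trichotomy (v a) (v b) with h | h | h
  · have := rnk_lt_of_lt hv h; omega
  · exact hne (hv h)
  · have := rnk_lt_of_lt hv h; omega

lemma rnk_vstar (hm : 2 ≤ m) (j : Fin m) : rnk (vstar m) j = (j : ℕ) + 1 := by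
  rw [rnk_eq (vstar_inj hm)]
  have : (Finset.univ.filter fun j' => vstar m j ≤ vstar m j') = Finset.Iic j := by
    ext j'
    simp only [Finset.mem_filter, Finset.mem_univ, true_and, Finset.mem_Iic]
    rw [← not_lt, vstar_lt hm, not_lt]
    exact ⟨fun h => Fin.le_def.2 h, fun h => Fin.le_def.1 h⟩
  rw [this, Fin.card_Iic]

lemma telescope1 (p : ℕ → ℝ) (M : ℕ) :
    ∑ q ∈ Finset.Icc 1 M, (q:ℝ) * (p (q-1) - p q)
      = (∑ r ∈ Finset.range M, p r) - (M:ℝ) * p M := by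
  induction M with
  | zero => simp
  | succ M ih =>
    rw [Finset.sum_Icc_succ_top (by omega), ih, Finset.sum_range_succ]
    have : (M + 1) - 1 = M := by omega
    rw [this]
    push_cast
    ring

lemma telescope2 (p : ℕ → ℝ) {r M : ℕ} (hr : 1 ≤ r) (hM : r ≤ M) :
    ∑ q ∈ Finset.Icc r M, (p (q-1) - p q) = p (r-1) - p M := by
  have h1 : Finset.Icc r M = Finset.Ico r (M+1) := by
    ext x; simp [Nat.lt_succ_iff]
  rw [h1, Finset.sum_Ico_eq_sum_range]
  have h2 : ∀ i, p (r + i - 1) - p (r + i) = (fun i => p (r - 1 + i)) i - (fun i => p (r - 1 + i)) (i+1) := by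
    intro i
    simp only
    congr 2 <;> omega
  rw [Finset.sum_congr rfl (fun i _ => h2 i), Finset.sum_range_sub']
  congr 2 <;> omega


lemma comp_prefU {m : ℕ} {v : Fin m → ℝ} (hv : IsPrefU v) (τ : Equiv.Perm (Fin m)) :
    IsPrefU (v ∘ τ) := by
  obtain ⟨⟨hb, ⟨j0, h0⟩, ⟨j1, h1⟩⟩, hinj⟩ := hv
  exact ⟨⟨fun j => hb (τ j), ⟨τ.symm j0, by simp [h0]⟩, ⟨τ.symm j1, by simp [h1]⟩⟩,
    hinj.comp τ.injective⟩

end Stmt3Aux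

/-- every anonymous, neutral, ordinal, unilateral and truthful
mechanism on tie-free profiles is a convex combination of the mechanisms
`J^{1,q}_U` for `q ∈ {1,…,m}`. -/
theorem stmt3 (n m : ℕ) (hn : 1 ≤ n) (hm : 2 ≤ m)
    (J : (Fin n → Fin m → ℝ) → Fin m → ℝ)
    (hJ : MechU J) (hA : AnonymousMech J) (hN : Neutral J)
    (hOrd : OrdinalMech J) (hUni : Unilateral J) (hT : Truthful J) :
    ∃ w : ℕ → ℝ, (∀ q, 0 ≤ w q) ∧ (∑ q ∈ Finset.Icc 1 m, w q = 1) ∧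
      ∀ u, IsProfileU u → ∀ j, J u j = ∑ q ∈ Finset.Icc 1 m, w q * Jone q u j := by
  have hmr : (2:ℝ) ≤ (m:ℝ) := by exact_mod_cast hm
  set v0 : Fin m → ℝ := Stmt3Aux.vstar m with hv0def
  have hv0U : IsPrefU v0 := ⟨Stmt3Aux.vstar_pref hm, Stmt3Aux.vstar_inj hm⟩
  rcases eq_or_lt_of_le hn with hn1 | hn2
  · -- n = 1
    subst hn1
    have hprofU : ∀ v : Fin 1 → Fin m → ℝ, IsPrefU (v 0) → IsProfileU v := by
      intro v hv i
      rw [Fin.eq_zero i]; exact hv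
    set f : Fin m → ℝ := J (fun _ => v0) with hfdef
    have hdist : IsDist f := hJ _ (hprofU _ hv0U)
    set p : ℕ → ℝ := fun r => if h : r < m then f ⟨r, h⟩ else 0 with hpdef
    -- Lemma A: J is determined by rank
    have keyA : ∀ u : Fin 1 → Fin m → ℝ, IsProfileU u → ∀ j,
        J u j = p (rnk (u 0) j - 1) := by
      intro u hu j
      set v : Fin m → ℝ := u 0 with hvdef
      have hvinj : Function.Injective v := (hu 0).2
      have hlt : ∀ j' : Fin m, rnk v j' - 1 < m := by
        intro j'
        have h1 := Stmt3Aux.rnk_le (v := v) j'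
        have h2 := Stmt3Aux.rnk_pos hvinj j'
        omega
      set σf : Fin m → Fin m := fun j' => ⟨rnk v j' - 1, hlt j'⟩ with hσdef
      have hσinj : Function.Injective σf := by
        intro a b hab
        apply Stmt3Aux.rnk_inj hvinj
        have h1 := Stmt3Aux.rnk_pos hvinj a
        have h2 := Stmt3Aux.rnk_pos hvinj b
        have h3 : rnk v a - 1 = rnk v b - 1 := congrArg Fin.val hab
        simp only
        omega
      set e : Equiv.Perm (Fin m) :=
        Equiv.ofBijective σf (Finite.injective_iff_bijective.mp hσinj) with hedef
      have heapp : ∀ a, (e a : ℕ) = rnk v a - 1 := fun a => rfl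
      have hcompU : IsProfileU (fun i : Fin 1 => u i ∘ e.symm) := by
        intro i
        exact Stmt3Aux.comp_prefU (hu i) e.symm
      have hord : J (fun i : Fin 1 => u i ∘ e.symm) = J (fun _ : Fin 1 => v0) := by
        apply hOrd _ _ hcompU (hprofU _ hv0U)
        intro i a b
        have hieq : u i = v := by rw [Fin.eq_zero i]
        show u i (e.symm a) < u i (e.symm b) ↔ v0 a < v0 b
        rw [hieq, hv0def, Stmt3Aux.vstar_lt hm,
          Stmt3Aux.lt_iff_rnk hvinj]
        have ha := heapp (e.symm a)
        have hb := heapp (e.symm b)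
        rw [Equiv.apply_symm_apply] at ha hb
        have h1 := Stmt3Aux.rnk_pos hvinj (e.symm a)
        have h2 := Stmt3Aux.rnk_pos hvinj (e.symm b)
        omega
      have h1 : J u j = f (e j) := by
        have hneu := hN e.symm u hu (e j)
        rw [Equiv.symm_apply_apply] at hneu
        rw [← hneu, hord]
      rw [h1, hpdef]
      simp only
      rw [dif_pos (hlt j)]
      rfl
    have hpnn : ∀ r, 0 ≤ p r := by
      intro r
      rw [hpdef]
      simp only
      split
      · exact hdist.1 _
      · exact le_refl 0
    have hpm : p m = 0 := by rw [hpdef]; simp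
    have hsump : ∑ r ∈ Finset.range m, p r = 1 := by
      rw [← Fin.sum_univ_eq_sum_range p m]
      rw [← hdist.2]
      apply Finset.sum_congr rfl
      intro j _
      rw [hpdef]
      simp only
      rw [dif_pos j.isLt]
    -- monotonicity from truthfulness
    have hmono : ∀ r : ℕ, r + 1 < m → p (r + 1) ≤ p r := by
      intro r hr
      set a : Fin m := ⟨r, by omega⟩ with hadef
      set b : Fin m := ⟨r + 1, hr⟩ with hbdef
      have hab : a ≠ b := by
        simp [hadef, hbdef, Fin.ext_iff]
      set τ : Equiv.Perm (Fin m) := Equiv.swap a b with hτdef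
      have hvt : IsPrefU (v0 ∘ τ) := Stmt3Aux.comp_prefU hv0U τ
      have hT' := hT (fun _ => v0) (hprofU _ hv0U) 0 (v0 ∘ τ) hvt
      have hupd : Function.update (fun _ : Fin 1 => v0) 0 (v0 ∘ τ) =
          fun _ : Fin 1 => v0 ∘ τ := by
        funext i
        rw [Fin.eq_zero i, Function.update_self]
      rw [hupd] at hT'
      have hneu : ∀ j, J (fun _ : Fin 1 => v0 ∘ τ) j = f (τ j) := by
        intro j
        exact hN τ (fun _ => v0) (hprofU _ hv0U) j
      have hT2 : ∑ j, f (τ j) * v0 j ≤ ∑ j, f j * v0 j := by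
        calc ∑ j, f (τ j) * v0 j = ∑ j, J (fun _ : Fin 1 => v0 ∘ τ) j * v0 j := by
              apply Finset.sum_congr rfl; intro j _; rw [hneu j]
        _ ≤ ∑ j, f j * v0 j := hT'
      have hre : ∑ j, f (τ j) * v0 j = ∑ j, f j * v0 (τ j) := by
        rw [← Equiv.sum_comp τ (fun j => f j * v0 (τ j))]
        apply Finset.sum_congr rfl
        intro j _
        rw [hτdef, Equiv.swap_apply_self]
      have key : (0:ℝ) ≤ ∑ j, f j * (v0 j - v0 (τ j)) := by
        have hsplit : ∑ j, f j * (v0 j - v0 (τ j)) =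
            (∑ j, f j * v0 j) - ∑ j, f j * v0 (τ j) := by
          rw [← Finset.sum_sub_distrib]
          apply Finset.sum_congr rfl
          intro j _
          ring
        rw [hsplit]
        rw [hre] at hT2
        linarith
      have hsum2 : ∑ j, f j * (v0 j - v0 (τ j)) =
          f a * (v0 a - v0 b) + f b * (v0 b - v0 a) := by
        rw [← Finset.sum_subset (Finset.subset_univ ({a, b} : Finset (Fin m)))]
        · rw [Finset.sum_pair hab, hτdef, Equiv.swap_apply_left, Equiv.swap_apply_right]
        · intro j _ hj
          simp only [Finset.mem_insert, Finset.mem_singleton, not_or] at hj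
          rw [hτdef, Equiv.swap_apply_of_ne_of_ne hj.1 hj.2]
          ring
      have hvab : v0 b < v0 a := by
        rw [hv0def]
        apply (Stmt3Aux.vstar_lt hm).2
        simp [hadef, hbdef]
      have hfba : f b ≤ f a := by
        rw [hsum2] at key
        nlinarith
      rw [hpdef]
      simp only
      rw [dif_pos hr, dif_pos (show r < m by omega)]
      exact hfba
    refine ⟨fun q => if 1 ≤ q ∧ q ≤ m then (q:ℝ) * (p (q - 1) - p q) else 0, ?_, ?_, ?_⟩
    · intro q
      dsimp only
      split
      next h =>
        obtain ⟨h1, h2⟩ := h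
        apply mul_nonneg (by positivity)
        rcases eq_or_lt_of_le h2 with hq | hq
        · subst hq
          rw [hpm]
          have := hpnn (q - 1)
          linarith
        · have hmo := hmono (q - 1) (by omega)
          have hq1 : q - 1 + 1 = q := by omega
          rw [hq1] at hmo
          linarith
      next => exact le_refl 0
    · have hcongr : ∑ q ∈ Finset.Icc 1 m,
          (if 1 ≤ q ∧ q ≤ m then (q:ℝ) * (p (q - 1) - p q) else 0)
          = ∑ q ∈ Finset.Icc 1 m, (q:ℝ) * (p (q - 1) - p q) := by
        apply Finset.sum_congr rfl
        intro q hq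
        rw [if_pos (Finset.mem_Icc.1 hq)]
      rw [hcongr, Stmt3Aux.telescope1, hsump, hpm]
      ring
    · intro u hu j
      rw [keyA u hu j]
      set r := rnk (u 0) j with hrdef
      have hr1 : 1 ≤ r := Stmt3Aux.rnk_pos (hu 0).2 j
      have hrm : r ≤ m := Stmt3Aux.rnk_le j
      have hJone : ∀ q : ℕ, Jone q u j = if r ≤ q then ((q:ℝ))⁻¹ else 0 := by
        intro q
        unfold Jone
        rw [Fin.sum_univ_one]
        norm_num
        rfl
      have hterm : ∀ q ∈ Finset.Icc 1 m,
          (if 1 ≤ q ∧ q ≤ m then (q:ℝ) * (p (q - 1) - p q) else 0) * Jone q u j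
          = if r ≤ q then p (q - 1) - p q else 0 := by
        intro q hq
        rw [if_pos (Finset.mem_Icc.1 hq), hJone q]
        have hq1 := (Finset.mem_Icc.1 hq).1
        have hq0 : (q:ℝ) ≠ 0 := by
          have : (1:ℝ) ≤ (q:ℝ) := by exact_mod_cast hq1
          linarith
        split
        · field_simp
        · ring
      rw [Finset.sum_congr rfl hterm, ← Finset.sum_filter]
      have hfil : (Finset.Icc 1 m).filter (fun q => r ≤ q) = Finset.Icc r m := by
        ext q
        simp only [Finset.mem_filter, Finset.mem_Icc]
        omega
      rw [hfil, Stmt3Aux.telescope2 p hr1 hrm, hpm]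
      ring
  · -- n ≥ 2
    have hconst : ∀ u u' : Fin n → Fin m → ℝ, IsProfileU u → IsProfileU u' →
        J u = J u' := by
      obtain ⟨i0, hi0⟩ := hUni
      intro u u' hu hu'
      set i1 : Fin n := if (i0 : ℕ) = 0 then ⟨1, hn2⟩ else ⟨0, by omega⟩ with hi1def
      have hne : i1 ≠ i0 := by
        rw [hi1def]
        split
        next h => simp [Fin.ext_iff]; omega
        next h => simp [Fin.ext_iff]; omega
      set wp : Fin n → Fin m → ℝ :=
        fun i => if i = i0 then u i0 else if i = i1 then u' i0 else v0 with hwpdef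
      have hwpU : IsProfileU wp := by
        intro i
        rw [hwpdef]
        simp only
        split
        · exact hu i0
        · split
          · exact hu' i0
          · exact hv0U
      have h1 : J u = J wp := by
        apply hi0 u wp hu hwpU
        rw [hwpdef]
        simp
      set σ : Equiv.Perm (Fin n) := Equiv.swap i0 i1 with hσdef
      have hw2U : IsProfileU (fun i => wp (σ i)) := fun i => hwpU (σ i)
      have h2 : J (fun i => wp (σ i)) = J wp := hA σ wp hwpU
      have h3 : J (fun i => wp (σ i)) = J u' := by
        apply hi0 _ u' hw2U hu'
        show wp (σ i0) = u' i0
        rw [hσdef, Equiv.swap_apply_left, hwpdef]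
        simp [hne]
      rw [h1, ← h2, h3]
    have huni : ∀ u, IsProfileU u → ∀ j, J u j = (m:ℝ)⁻¹ := by
      intro u hu j
      set c : Fin m → ℝ := J (fun _ : Fin n => v0) with hcdef
      have hcd : IsDist c := hJ _ (fun _ => hv0U)
      have hceq : ∀ j₁ j₂ : Fin m, c j₁ = c j₂ := by
        intro j₁ j₂
        have hneu := hN (Equiv.swap j₁ j₂) (fun _ => v0) (fun _ => hv0U) j₁
        have hc2 : J (fun _ : Fin n => v0 ∘ Equiv.swap j₁ j₂) = c :=
          hconst _ _ (fun _ => Stmt3Aux.comp_prefU hv0U _) (fun _ => hv0U)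
        rw [hc2, Equiv.swap_apply_left] at hneu
        exact hneu
      have hsumc : ∑ j', c j' = (m:ℝ) * c j := by
        rw [Finset.sum_congr rfl (fun j' _ => hceq j' j), Finset.sum_const,
          Finset.card_univ, Fintype.card_fin, nsmul_eq_mul]
      have hcj : c j = (m:ℝ)⁻¹ := by
        have hm0' : (m:ℝ) ≠ 0 := by linarith
        have := hcd.2
        rw [hsumc] at this
        field_simp
        linarith
      rw [hconst u _ hu (fun _ => hv0U)]
      exact hcj
    refine ⟨fun q => if q = m then 1 else 0, ?_, ?_, ?_⟩
    · intro q
      dsimp only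
      split <;> norm_num
    · rw [Finset.sum_ite_eq' (Finset.Icc 1 m) m (fun _ => (1:ℝ))]
      rw [if_pos (Finset.mem_Icc.2 ⟨by omega, le_refl m⟩)]
    · intro u hu j
      rw [huni u hu j]
      have hterm : ∀ q ∈ Finset.Icc 1 m,
          (if q = m then (1:ℝ) else 0) * Jone q u j
          = if q = m then Jone m u j else 0 := by
        intro q _
        split
        next h => rw [h]; ring
        next => ring
      rw [Finset.sum_congr rfl hterm,
        Finset.sum_ite_eq' (Finset.Icc 1 m) m (fun _ => Jone m u j),
        if_pos (Finset.mem_Icc.2 ⟨by omega, le_refl m⟩)]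
      unfold Jone
      have hin : ∀ i : Fin n, (if rnk (u i) j ≤ m then ((m:ℝ))⁻¹ else 0) = (m:ℝ)⁻¹ :=
        fun i => if_pos (Stmt3Aux.rnk_le j)
      rw [Finset.sum_congr rfl (fun i _ => hin i), Finset.sum_const,
        Finset.card_univ, Fintype.card_fin, nsmul_eq_mul]
      have hn0 : (n:ℝ) ≠ 0 := by
        have : (1:ℝ) ≤ (n:ℝ) := by exact_mod_cast hn
        linarith
      field_simp
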